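/- Let m ≥ 1. Define the m×m matrix M with entries m_{i,j} = ∑_{t=0}^{i-j} [1/(2^{2t-1}·(2t+1)!·(2(i-t))!)] · ∑_{s=j+1}^{2j} (-1)^s·C(2j,s)·(s-j)^{2(i-t)} for 1 ≤ i,j ≤ m. Then m_{i,j} = 0 whenever i < j and m_{i,i} = 1 for all i; in particular, M is lower unitriangular and invertible. -/

import Mathlib

open Finset

lemma fwdDiff_sub_pow (c : ℚ) (k : ℕ) :
    fwdDiff (1 : ℕ) (fun s : ℕ => ((s : ℚ) - c) ^ k)
      = fun s : ℕ => ∑ u ∈ Finset.range k, (k.choose u : ℚ) * ((s : ℚ) - c) ^ u := by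
  funext s
  show (((s + 1 : ℕ) : ℚ) - c) ^ k - ((s : ℚ) - c) ^ k = _
  have h1 : ((s + 1 : ℕ) : ℚ) - c = ((s : ℚ) - c) + 1 := by push_cast; ring
  rw [h1, add_pow, Finset.sum_range_succ]
  simp only [one_pow, mul_one, Nat.choose_self, Nat.cast_one, Nat.sub_self, pow_zero,
    add_sub_cancel_right]
  exact Finset.sum_congr rfl fun u _ => by ring

lemma fwdDiff_iter_sub_pow_key (n : ℕ) :
    ∀ c : ℚ, (∀ k, k < n → (fwdDiff (1 : ℕ))^[n] (fun s : ℕ => ((s : ℚ) - c) ^ k) 0 = 0) ∧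
      (fwdDiff (1 : ℕ))^[n] (fun s : ℕ => ((s : ℚ) - c) ^ n) 0 = (n.factorial : ℚ) := by
  induction n with
  | zero =>
      intro c
      refine ⟨fun k hk => absurd hk (Nat.not_lt_zero k), ?_⟩
      simp
  | succ n ih =>
      intro c
      have step : ∀ k : ℕ, (fwdDiff (1 : ℕ))^[n+1] (fun s : ℕ => ((s : ℚ) - c) ^ k) 0
          = ∑ u ∈ Finset.range k,
              (k.choose u : ℚ) * (fwdDiff (1 : ℕ))^[n] (fun s : ℕ => ((s : ℚ) - c) ^ u) 0 := by
        intro k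
        rw [Function.iterate_succ_apply, fwdDiff_sub_pow]
        have heq : (fun s : ℕ => ∑ u ∈ Finset.range k, (k.choose u : ℚ) * ((s : ℚ) - c) ^ u)
            = ∑ u ∈ Finset.range k, (k.choose u : ℚ) • (fun s : ℕ => ((s : ℚ) - c) ^ u) := by
          funext s
          simp [Finset.sum_apply, smul_eq_mul]
        rw [heq, fwdDiff_iter_finset_sum]
        simp only [fwdDiff_iter_const_smul]
        rw [Finset.sum_apply]
        simp [smul_eq_mul]
      constructor
      · intro k hk
        rw [step k]
        apply Finset.sum_eq_zero
        intro u hu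
        have hu' : u < n := lt_of_lt_of_le (Finset.mem_range.mp hu) (Nat.lt_succ_iff.mp hk)
        rw [(ih c).1 u hu', mul_zero]
      · rw [step (n+1), Finset.sum_range_succ]
        have hz : ∀ u ∈ Finset.range n,
            ((n+1).choose u : ℚ) * (fwdDiff (1 : ℕ))^[n] (fun s : ℕ => ((s : ℚ) - c) ^ u) 0 = 0 := by
          intro u hu
          rw [(ih c).1 u (Finset.mem_range.mp hu), mul_zero]
        rw [Finset.sum_eq_zero hz, (ih c).2, zero_add, Nat.choose_succ_self_right,
          Nat.factorial_succ]
        push_cast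
        ring

lemma alt_sum_eq (n k : ℕ) (c : ℚ) :
    ∑ s ∈ Finset.range (n + 1), (-1 : ℚ) ^ s * (n.choose s : ℚ) * ((s : ℚ) - c) ^ k
      = (-1 : ℚ) ^ n * (fwdDiff (1 : ℕ))^[n] (fun s : ℕ => ((s : ℚ) - c) ^ k) 0 := by
  rw [fwdDiff_iter_eq_sum_shift, Finset.mul_sum]
  apply Finset.sum_congr rfl
  intro s hs
  have hs' : s ≤ n := Nat.lt_succ_iff.mp (Finset.mem_range.mp hs)
  have hsimp : (0 : ℕ) + s • (1 : ℕ) = s := by simp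
  rw [hsimp, zsmul_eq_mul]
  have hsign : ((-1 : ℚ) ^ n * (-1 : ℚ) ^ (n - s)) = (-1 : ℚ) ^ s := by
    have hne : (-1 : ℚ) ^ s ≠ 0 := pow_ne_zero _ (by norm_num)
    have h1 : ((-1 : ℚ) ^ n * (-1 : ℚ) ^ (n - s)) * (-1 : ℚ) ^ s = 1 := by
      rw [mul_assoc, ← pow_add, ← pow_add]
      have h : n + (n - s + s) = 2 * n := by omega
      rw [h, pow_mul]
      norm_num
    have h2 : ((-1 : ℚ) ^ s) * (-1 : ℚ) ^ s = 1 := by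
      rw [← pow_add, ← two_mul, pow_mul]; norm_num
    exact mul_right_cancel₀ hne (h1.trans h2.symm)
  push_cast
  calc (-1 : ℚ) ^ s * (n.choose s : ℚ) * ((s : ℚ) - c) ^ k
      = ((-1 : ℚ) ^ n * (-1 : ℚ) ^ (n - s)) * (n.choose s : ℚ) * ((s : ℚ) - c) ^ k := by
        rw [hsign]
    _ = (-1 : ℚ) ^ n * ((-1 : ℚ) ^ (n - s) * (n.choose s : ℚ) * ((s : ℚ) - c) ^ k) := by ring

lemma half_sum (J k : ℕ) (hJ : 1 ≤ J) (hk : 1 ≤ k) :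
    2 * ∑ s ∈ Finset.Icc (J + 1) (2 * J),
        (-1 : ℚ) ^ s * ((2 * J).choose s : ℚ) * ((s : ℚ) - J) ^ (2 * k)
      = ∑ s ∈ Finset.range (2 * J + 1),
          (-1 : ℚ) ^ s * ((2 * J).choose s : ℚ) * ((s : ℚ) - J) ^ (2 * k) := by
  have hsplit : ∑ s ∈ Finset.range (2 * J + 1),
        (-1 : ℚ) ^ s * ((2 * J).choose s : ℚ) * ((s : ℚ) - J) ^ (2 * k)
      = (∑ s ∈ Finset.range (J + 1),
          (-1 : ℚ) ^ s * ((2 * J).choose s : ℚ) * ((s : ℚ) - J) ^ (2 * k))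
        + ∑ s ∈ Finset.Ico (J + 1) (2 * J + 1),
            (-1 : ℚ) ^ s * ((2 * J).choose s : ℚ) * ((s : ℚ) - J) ^ (2 * k) := by
    rw [Finset.range_eq_Ico,
      ← Finset.sum_Ico_consecutive _ (by omega : 0 ≤ J + 1) (by omega : J + 1 ≤ 2 * J + 1),
      Finset.range_eq_Ico]
  have hIcoIcc : Finset.Ico (J + 1) (2 * J + 1) = Finset.Icc (J + 1) (2 * J) := by
    ext x; simp [Nat.lt_succ_iff]
  have hJterm : ∑ s ∈ Finset.range (J + 1),
        (-1 : ℚ) ^ s * ((2 * J).choose s : ℚ) * ((s : ℚ) - J) ^ (2 * k)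
      = ∑ s ∈ Finset.range J,
          (-1 : ℚ) ^ s * ((2 * J).choose s : ℚ) * ((s : ℚ) - J) ^ (2 * k) := by
    rw [Finset.sum_range_succ]
    have h0 : ((J : ℚ) - J) ^ (2 * k) = 0 := by
      rw [sub_self, zero_pow]; omega
    rw [h0, mul_zero, add_zero]
  have hbij : ∑ s ∈ Finset.range J,
        (-1 : ℚ) ^ s * ((2 * J).choose s : ℚ) * ((s : ℚ) - J) ^ (2 * k)
      = ∑ s ∈ Finset.Icc (J + 1) (2 * J),
          (-1 : ℚ) ^ s * ((2 * J).choose s : ℚ) * ((s : ℚ) - J) ^ (2 * k) := by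
    apply Finset.sum_nbij' (fun s => 2 * J - s) (fun s => 2 * J - s)
    · intro a ha
      simp only [Finset.mem_range] at ha
      simp only [Finset.mem_Icc]
      omega
    · intro a ha
      simp only [Finset.mem_Icc] at ha
      simp only [Finset.mem_range]
      omega
    · intro a ha; simp only [Finset.mem_range] at ha; omega
    · intro a ha; simp only [Finset.mem_Icc] at ha; omega
    · intro a ha
      simp only [Finset.mem_range] at ha
      have h1 : (-1 : ℚ) ^ (2 * J - a) = (-1 : ℚ) ^ a := by
        have hpar : Even (2 * J - a) ↔ Even a := by
          rw [Nat.even_sub (by omega : a ≤ 2 * J)]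
          simp [Nat.even_mul]
        rcases Nat.even_or_odd a with h | h
        · rw [h.neg_one_pow, (hpar.mpr h).neg_one_pow]
        · have hno : ¬ Even (2 * J - a) := fun hc => (Nat.not_even_iff_odd.mpr h) (hpar.mp hc)
          rw [h.neg_one_pow, (Nat.not_even_iff_odd.mp hno).neg_one_pow]
      have h2 : ((2 * J).choose (2 * J - a) : ℚ) = ((2 * J).choose a : ℚ) := by
        rw [Nat.choose_symm (by omega : a ≤ 2 * J)]
      have h3 : (((2 * J - a : ℕ) : ℚ) - J) ^ (2 * k) = ((a : ℚ) - J) ^ (2 * k) := by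
        have hc : ((2 * J - a : ℕ) : ℚ) = 2 * J - a := by
          push_cast [Nat.cast_sub (by omega : a ≤ 2 * J)]; ring
        rw [hc]
        have heq : (2 * (J : ℚ) - a - J) = -((a : ℚ) - J) := by ring
        rw [heq, Even.neg_pow (even_two_mul k)]
      rw [h1, h2, h3]
  rw [hsplit, hIcoIcc, hJterm, ← hbij]
  ring

lemma inner_sum_eval (J k : ℕ) (hJ : 1 ≤ J) (hk : 1 ≤ k) :
    ∑ s ∈ Finset.Icc (J + 1) (2 * J),
        (-1 : ℚ) ^ s * ((2 * J).choose s : ℚ) * ((s : ℚ) - J) ^ (2 * k)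
      = (1 / 2) * (fwdDiff (1 : ℕ))^[2 * J] (fun s : ℕ => ((s : ℚ) - J) ^ (2 * k)) 0 := by
  have h := half_sum J k hJ hk
  rw [alt_sum_eq (2 * J) (2 * k) (J : ℚ)] at h
  have h1 : (-1 : ℚ) ^ (2 * J) = 1 := by rw [pow_mul]; norm_num
  rw [h1, one_mul] at h
  linarith

theorem stmt8 (m : ℕ) (hm : 1 ≤ m) (M : Matrix (Fin m) (Fin m) ℚ)
    (hM : ∀ i j : Fin m, M i j =
      ∑ t ∈ Finset.range ((i : ℕ) + 1 - ((j : ℕ) + 1) + 1),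
        (1 / ((2 : ℚ) ^ (2 * (t : ℤ) - 1) * ((2 * t + 1).factorial)
            * ((2 * ((i : ℕ) + 1 - t)).factorial)))
          * ∑ s ∈ Finset.Icc ((j : ℕ) + 2) (2 * ((j : ℕ) + 1)),
              (-1 : ℚ) ^ s * ((2 * ((j : ℕ) + 1)).choose s)
                * ((s : ℚ) - ((j : ℕ) + 1)) ^ (2 * ((i : ℕ) + 1 - t))) :
    (∀ i j : Fin m, (i : ℕ) < (j : ℕ) → M i j = 0) ∧
      (∀ i : Fin m, M i i = 1) ∧ IsUnit M := by
  have hzero : ∀ i j : Fin m, (i : ℕ) < (j : ℕ) → M i j = 0 := by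
    intro i j hij
    rw [hM i j]
    have hr : (i : ℕ) + 1 - ((j : ℕ) + 1) + 1 = 1 := by omega
    rw [hr, Finset.sum_range_one]
    simp only [Nat.sub_zero]
    have hinner := inner_sum_eval ((j : ℕ) + 1) ((i : ℕ) + 1) (by omega) (by omega)
    have hz2 : (fwdDiff (1 : ℕ))^[2 * ((j : ℕ) + 1)]
        (fun s : ℕ => ((s : ℚ) - (((j : ℕ) + 1 : ℕ) : ℚ)) ^ (2 * ((i : ℕ) + 1))) 0 = 0 := by
      apply (fwdDiff_iter_sub_pow_key (2 * ((j : ℕ) + 1)) ((((j : ℕ) + 1 : ℕ)) : ℚ)).1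
      omega
    rw [hz2, mul_zero] at hinner
    have hIcc : (j : ℕ) + 1 + 1 = (j : ℕ) + 2 := by omega
    rw [hIcc] at hinner
    push_cast at hinner
    rw [hinner, mul_zero]
  have hdiag : ∀ i : Fin m, M i i = 1 := by
    intro i
    rw [hM i i]
    have hr : (i : ℕ) + 1 - ((i : ℕ) + 1) + 1 = 1 := by omega
    rw [hr, Finset.sum_range_one]
    simp only [Nat.sub_zero]
    have hinner := inner_sum_eval ((i : ℕ) + 1) ((i : ℕ) + 1) (by omega) (by omega)
    have hd : (fwdDiff (1 : ℕ))^[2 * ((i : ℕ) + 1)]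
        (fun s : ℕ => ((s : ℚ) - (((i : ℕ) + 1 : ℕ) : ℚ)) ^ (2 * ((i : ℕ) + 1))) 0
        = ((2 * ((i : ℕ) + 1)).factorial : ℚ) :=
      (fwdDiff_iter_sub_pow_key (2 * ((i : ℕ) + 1)) ((((i : ℕ) + 1 : ℕ)) : ℚ)).2
    rw [hd] at hinner
    have hIcc : (i : ℕ) + 1 + 1 = (i : ℕ) + 2 := by omega
    rw [hIcc] at hinner
    push_cast at hinner
    rw [hinner]
    have hfac : ((2 * ((i : ℕ) + 1)).factorial : ℚ) ≠ 0 := by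
      exact_mod_cast Nat.factorial_ne_zero _
    push_cast
    have h2 : (2 : ℚ) ^ (-1 : ℤ) = 2⁻¹ := by norm_num
    rw [h2]
    simp only [Nat.factorial_one, Nat.cast_one, mul_one]
    field_simp
  refine ⟨hzero, hdiag, ?_⟩
  have hdet : M.det = 1 := by
    have htri : M.BlockTriangular OrderDual.toDual := by
      intro i j hij
      exact hzero i j hij
    rw [Matrix.det_of_lowerTriangular M htri]
    exact Finset.prod_eq_one fun i _ => hdiag i
  exact (Matrix.isUnit_iff_isUnit_det M).mpr (hdet ▸ isUnit_one)
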